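/- The union of the maps α_m (0 ≤ m ≤ p) covers the prism: Δ^p × [0,1] = ⋃_{m=0}^{p} α_m(Δ^{p+1}), where α_m : Δ^{p+1} → Δ^p × [0,1] is defined by α_m(x) = (ζ_m(x), Σ_{i=m+1}^{p+1} xᵢ). -/

import Mathlib

open Finset


private lemma fin_filter_sum (n k : ℕ) (f : Fin n → ℝ) (g : ℕ → ℝ)
    (hfg : ∀ i : Fin n, f i = g i) :
    ∑ i ∈ Finset.univ.filter (fun i : Fin n => k ≤ (i : ℕ)), f i
      = ∑ j ∈ Finset.Ico k n, g j := by
  rw [Finset.sum_filter]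
  have : ∀ i : Fin n, (if k ≤ (i : ℕ) then f i else 0)
      = (fun j : ℕ => if k ≤ j then g j else 0) (i : ℕ) := by
    intro i; simp only [hfg i]
  rw [Finset.sum_congr rfl (fun i _ => this i),
    Fin.sum_univ_eq_sum_range (fun j => if k ≤ j then g j else 0) n,
    ← Finset.sum_filter]
  congr 1
  ext j
  simp only [Finset.mem_filter, Finset.mem_range, Finset.mem_Ico]
  omega

private lemma prism_main (p : ℕ) :
    (stdSimplex ℝ (Fin (p+1))) ×ˢ (Set.Icc (0:ℝ) 1) =
      ⋃ m : Fin (p+1), (fun x => ((fun (m : Fin (p+1)) (x : Fin (p+2) → ℝ) (i : Fin (p+1)) =>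
      if (i : ℕ) < (m : ℕ) then x i.castSucc
      else if i = m then x i.castSucc + x i.succ
      else x i.succ) m x,
      (fun (m : Fin (p+1)) (x : Fin (p+2) → ℝ) =>
      ∑ i ∈ Finset.univ.filter (fun i : Fin (p+2) => (m : ℕ) + 1 ≤ (i : ℕ)), x i) m x))
        '' stdSimplex ℝ (Fin (p+2)) := by
  ext ⟨y, t⟩
  simp only [Set.mem_prod, Set.mem_iUnion, Set.mem_image, Set.mem_Icc,
    stdSimplex, Set.mem_setOf_eq, Prod.mk.injEq]
  constructor
  · rintro ⟨⟨hy0, hy1⟩, ht0, ht1⟩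
    set Y : ℕ → ℝ := fun j => if h : j < p+1 then y ⟨j, h⟩ else 0 with hYdef
    have hYnn : ∀ j, 0 ≤ Y j := by
      intro j; simp only [hYdef]; split
      · exact hy0 _
      · exact le_refl 0
    set tail : ℕ → ℝ := fun k => ∑ j ∈ Finset.Ico k (p+1), Y j with htaildef
    have htail_nn : ∀ k, 0 ≤ tail k := fun k => Finset.sum_nonneg fun j _ => hYnn j
    have htail0 : tail 0 = 1 := by
      simp only [htaildef]
      rw [show Finset.Ico 0 (p+1) = Finset.range (p+1) by rw [Finset.range_eq_Ico],
        ← Fin.sum_univ_eq_sum_range Y (p+1)]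
      rw [← hy1]
      exact Finset.sum_congr rfl fun i _ => by
        simp [hYdef, i.isLt]
        intro h
        exact (Nat.not_lt.mpr (Nat.lt_succ_iff.mp i.isLt) h).elim
    have htail_top : tail (p+1) = 0 := by simp [htaildef]
    have hstep : ∀ k, k ≤ p → tail k = Y k + tail (k+1) := by
      intro k hk
      simp only [htaildef]
      exact Finset.sum_eq_sum_Ico_succ_bot (by omega) Y
    have hex : ∃ m, tail (m+1) ≤ t := ⟨p, by rw [htail_top]; exact ht0⟩
    set m := Nat.find hex with hmdef
    have hm_le : m ≤ p := Nat.find_le (by rw [htail_top]; exact ht0)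
    have h1 : tail (m+1) ≤ t := Nat.find_spec hex
    have h2 : t ≤ tail m := by
      rcases Nat.eq_zero_or_pos m with h | h
      · rw [h, htail0]; exact ht1
      · have hmin := Nat.find_min hex (m := m - 1) (by omega)
        have hm1 : m - 1 + 1 = m := by omega
        rw [hm1] at hmin
        linarith [not_le.mp hmin]
    set X : ℕ → ℝ := fun j =>
      if j < m then Y j else if j = m then tail m - t
      else if j = m+1 then t - tail (m+1) else Y (j-1) with hXdef
    set mf : Fin (p+1) := ⟨m, by omega⟩ with hmfdef
    have hmfv : (mf : ℕ) = m := rfl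
    have e3 : X (m+1) = t - tail (m+1) := by
      simp only [hXdef]
      split_ifs <;> first | rfl | omega
    have e4 : ∑ j ∈ Finset.Ico (m+2) (p+2), X j = tail (m+1) := by
      simp only [htaildef]
      rw [Finset.sum_Ico_eq_sum_range, Finset.sum_Ico_eq_sum_range,
        show p + 2 - (m + 2) = p + 1 - (m + 1) by omega]
      refine Finset.sum_congr rfl fun j hj => ?_
      simp only [hXdef]
      split_ifs <;> try omega
      congr 1
      omega
    refine ⟨mf, fun j => X (j : ℕ), ⟨?_, ?_⟩, ?_, ?_⟩
    · intro j
      simp only [hXdef]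
      split_ifs
      · exact hYnn _
      · linarith
      · linarith
      · exact hYnn _
    · rw [Fin.sum_univ_eq_sum_range X (p+2),
        ← Finset.sum_range_add_sum_Ico X (show m ≤ p+2 by omega),
        Finset.sum_eq_sum_Ico_succ_bot (show m < p+2 by omega) X,
        Finset.sum_eq_sum_Ico_succ_bot (show m+1 < p+2 by omega) X]
      have e1 : ∑ j ∈ Finset.range m, X j = ∑ j ∈ Finset.range m, Y j :=
        Finset.sum_congr rfl fun j hj => by
          simp only [hXdef]; rw [if_pos (Finset.mem_range.mp hj)]
      have e2 : X m = tail m - t := by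
        simp only [hXdef]
        split_ifs <;> first | rfl | omega
      have e5 : ∑ j ∈ Finset.range m, Y j + tail m = 1 := by
        rw [← htail0]
        simp only [htaildef]
        rw [Finset.range_eq_Ico]
        exact Finset.sum_Ico_consecutive Y (Nat.zero_le m) (by omega)
      rw [e1, e2, e3, e4]
      linarith
    · -- ζ mf x = y
      funext i
      simp only [hmfv]
      split_ifs with hlt heq
      · have hlt' : (i : ℕ) < m := hlt
        simp only [hXdef, hYdef, Fin.coe_castSucc]
        split_ifs <;> first | exact congrArg y (Fin.ext rfl) | omega
      · have him : (i : ℕ) = m := by rw [heq, hmfv]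
        have ec : X ((i.castSucc : ℕ)) = tail m - t := by
          rw [Fin.coe_castSucc, him]
          simp only [hXdef]
          split_ifs <;> first | rfl | omega
        have es : X ((i.succ : ℕ)) = t - tail (m+1) := by
          rw [Fin.val_succ, him]
          exact e3
        rw [ec, es]
        have hYm : Y m = y i := by
          simp only [hYdef]
          rw [dif_pos (show m < p+1 by omega)]
          exact congrArg y (Fin.ext him.symm)
        have hs := hstep m hm_le
        linarith
      · have hlt' : ¬ (i : ℕ) < m := hlt
        have him : (i : ℕ) ≠ m := fun hc => heq (Fin.ext (hc.trans hmfv.symm))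
        simp only [hXdef, Fin.val_succ]
        split_ifs with a b c
        · omega
        · omega
        · omega
        · simp only [hYdef]
          rw [dif_pos (show (i:ℕ)+1-1 < p+1 by omega)]
          exact congrArg y (Fin.ext (show (i:ℕ)+1-1 = (i:ℕ) by omega))
    · -- S mf x = t
      rw [fin_filter_sum (p+2) (m+1) _ X (fun i => rfl),
        Finset.sum_eq_sum_Ico_succ_bot (show m+1 < p+2 by omega) X, e3, e4]
      ring
  · rintro ⟨m, x, ⟨hx0, hx1⟩, hζ, hS⟩
    refine ⟨⟨fun i => ?_, ?_⟩, ?_, ?_⟩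
    · rw [← hζ]
      simp only
      split_ifs
      · exact hx0 _
      · exact add_nonneg (hx0 _) (hx0 _)
      · exact hx0 _
    · rw [← hζ]
      simp only
      have key : ∀ i : Fin (p+1),
          (if (i:ℕ) < (m:ℕ) then x i.castSucc else if i = m then x i.castSucc + x i.succ
            else x i.succ)
          = x (m.castSucc.succAbove i) + (if i = m then x m.castSucc else 0) := by
        intro i
        rcases lt_trichotomy i m with h | h | h
        · rw [Fin.succAbove_of_castSucc_lt _ _ (Fin.castSucc_lt_castSucc_iff.mpr h),
            if_pos (show (i:ℕ) < (m:ℕ) from h), if_neg (ne_of_lt h), add_zero]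
        · subst h
          rw [Fin.succAbove_of_le_castSucc _ _ le_rfl,
            if_neg (lt_irrefl _), if_pos rfl, if_pos rfl]
          ring
        · rw [Fin.succAbove_of_le_castSucc _ _ (Fin.castSucc_le_castSucc_iff.mpr h.le),
            if_neg (show ¬ (i:ℕ) < (m:ℕ) from not_lt.mpr h.le),
            if_neg (ne_of_gt h), if_neg (ne_of_gt h), add_zero]
      rw [Finset.sum_congr rfl (fun i _ => key i), Finset.sum_add_distrib,
        Finset.sum_ite_eq' Finset.univ m (fun _ => x m.castSucc),
        if_pos (Finset.mem_univ m)]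
      have hsA := Fin.sum_univ_succAbove x m.castSucc
      linarith
    · rw [← hS]
      exact Finset.sum_nonneg fun i _ => hx0 i
    · rw [← hS, ← hx1]
      exact Finset.sum_le_sum_of_subset_of_nonneg (Finset.filter_subset _ _)
        fun i _ _ => hx0 i


/-- The images of the prism triangulation maps `α_m` (`0 ≤ m ≤ p`) cover the prism
`Δ^p × [0,1]`. -/
theorem prism_triangulation_covers (p : ℕ) :
    let ζ : Fin (p+1) → (Fin (p+2) → ℝ) → (Fin (p+1) → ℝ) := fun m x i =>
      if (i : ℕ) < (m : ℕ) then x i.castSucc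
      else if i = m then x i.castSucc + x i.succ
      else x i.succ
    let S : Fin (p+1) → (Fin (p+2) → ℝ) → ℝ := fun m x =>
      ∑ i ∈ Finset.univ.filter (fun i : Fin (p+2) => (m : ℕ) + 1 ≤ (i : ℕ)), x i
    (stdSimplex ℝ (Fin (p+1))) ×ˢ (Set.Icc (0:ℝ) 1) =
      ⋃ m : Fin (p+1), (fun x => (ζ m x, S m x)) '' stdSimplex ℝ (Fin (p+2)) := by
  intro ζ S
  exact prism_main p
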